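/- Assume the density ratio model: G_0, …, G_m are Borel probability measures on ℝ, q : ℝ → ℝ^d is Borel measurable, θ_0 = 0 and θ_1, …, θ_m ∈ ℝ^d, and G_k has density x ↦ exp(θ_kᵀ q(x)) with respect to G_0 for every k. Let n_0, …, n_m be positive integers, n = Σ_k n_k, ρ_k = n_k/n, h(x) = Σ_{k=0}^m ρ_k exp(θ_kᵀ q(x)) and h_r(x) = ρ_r exp(θ_rᵀ q(x))/h(x). Let {X_{kj} : 0 ≤ k ≤ m, 1 ≤ j ≤ n_k} be independent random variables with X_{kj} distributed according to G_k, and define G̃_r(x) = n_r^{-1} Σ_{k,j} h_r(X_{kj}) 1{X_{kj} ≤ x}. Then for every 0 ≤ r ≤ m and every x ∈ ℝ, E[(G̃_r(x) − G_r((−∞, x]))²] ≤ n / n_r². -/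

import Mathlib

open MeasureTheory ProbabilityTheory
open scoped ENNReal NNReal

/-- under the density ratio model, the linearized (oracle) empirical-likelihood
estimator `G̃_r(x) = n_r^{-1} Σ_{k,j} h_r(X_{kj}) 1{X_{kj} ≤ x}` satisfies the
uniform-in-`x` second moment bound `E[(G̃_r(x) - G_r((-∞,x]))²] ≤ n / n_r²`. -/
theorem drm_oracle_estimator_second_moment (m d : ℕ) (hm : 1 ≤ m) (hd : 1 ≤ d)
    (G : Fin (m + 1) → Measure ℝ) [∀ k, IsProbabilityMeasure (G k)]
    (q : ℝ → Fin d → ℝ) (hq : Measurable q)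
    (θ : Fin (m + 1) → Fin d → ℝ) (hθ0 : θ 0 = 0)
    (hG : ∀ k, G k =
      (G 0).withDensity fun t => ENNReal.ofReal (Real.exp (∑ i, θ k i * q t i)))
    (n : Fin (m + 1) → ℕ) (hn : ∀ k, 0 < n k)
    (ρ : Fin (m + 1) → ℝ) (hρ : ∀ k, ρ k = (n k : ℝ) / ∑ k', (n k' : ℝ))
    (hfun : Fin (m + 1) → ℝ → ℝ)
    (hhfun : ∀ k t, hfun k t =
      ρ k * Real.exp (∑ i, θ k i * q t i) /
        ∑ k', ρ k' * Real.exp (∑ i, θ k' i * q t i))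
    {Ω : Type} [MeasurableSpace Ω] (P : Measure Ω) [IsProbabilityMeasure P]
    (X : (k : Fin (m + 1)) → Fin (n k) → Ω → ℝ)
    (hXmeas : ∀ k j, Measurable (X k j))
    (hXlaw : ∀ k j, Measure.map (X k j) P = G k)
    (hXindep : iIndepFun
      (fun kj : Σ k : Fin (m + 1), Fin (n k) => X kj.1 kj.2) P)
    (r : Fin (m + 1)) (x : ℝ) :
    ∫ ω, (((n r : ℝ))⁻¹ *
        (∑ k, ∑ j, hfun r (X k j ω) * (if X k j ω ≤ x then (1 : ℝ) else 0)) -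
        (G r (Set.Iic x)).toReal) ^ 2 ∂P ≤
      (∑ k', (n k' : ℝ)) / (n r : ℝ) ^ 2 := by
  classical
  -- basic positivity facts
  have hNpos : (0 : ℝ) < ∑ k', (n k' : ℝ) :=
    Finset.sum_pos (fun k _ => by exact_mod_cast hn k) ⟨0, Finset.mem_univ 0⟩
  have hnr : (0 : ℝ) < (n r : ℝ) := by exact_mod_cast hn r
  have hρpos : ∀ k, 0 < ρ k := fun k => by
    rw [hρ]; exact div_pos (by exact_mod_cast hn k) hNpos
  set e : Fin (m + 1) → ℝ → ℝ := fun k t => Real.exp (∑ i, θ k i * q t i) with he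
  have hemeas : ∀ k, Measurable (e k) := by
    intro k
    exact (Finset.measurable_sum Finset.univ fun i _ =>
      (measurable_const.mul ((measurable_pi_apply i).comp hq))).exp
  have hHpos : ∀ t, 0 < ∑ k', ρ k' * e k' t := fun t =>
    Finset.sum_pos (fun k _ => mul_pos (hρpos k) (Real.exp_pos _)) ⟨0, Finset.mem_univ 0⟩
  -- the bounded measurable function f
  set f : ℝ → ℝ := fun t => hfun r t * (if t ≤ x then 1 else 0) with hf
  have hfun01 : ∀ t, hfun r t ∈ Set.Icc (0 : ℝ) 1 := by
    intro t
    rw [hhfun]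
    constructor
    · exact div_nonneg (mul_pos (hρpos r) (Real.exp_pos _)).le (hHpos t).le
    · rw [div_le_one (hHpos t)]
      exact Finset.single_le_sum (f := fun k' => ρ k' * e k' t)
        (fun k _ => (mul_pos (hρpos k) (Real.exp_pos _)).le) (Finset.mem_univ r)
  have hf01 : ∀ t, f t ∈ Set.Icc (0 : ℝ) 1 := by
    intro t
    simp only [hf]
    by_cases h : t ≤ x
    · simpa [h] using hfun01 t
    · simp [h]
  have hfunmeas : Measurable (hfun r) := by
    have : hfun r = fun t => ρ r * e r t / ∑ k', ρ k' * e k' t := by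
      funext t; exact hhfun r t
    rw [this]
    exact (measurable_const.mul (hemeas r)).div
      (Finset.measurable_sum Finset.univ fun k _ => measurable_const.mul (hemeas k))
  have hfmeas : Measurable f := by
    apply hfunmeas.mul
    exact Measurable.ite measurableSet_Iic measurable_const measurable_const
  -- the random variables
  set Y : (Σ k : Fin (m + 1), Fin (n k)) → Ω → ℝ :=
    fun i ω => f (X i.1 i.2 ω) with hY
  have hYmeas : ∀ i, Measurable (Y i) := fun i => hfmeas.comp (hXmeas i.1 i.2)
  have hYbdd : ∀ i, ∀ᵐ ω ∂P, Y i ω ∈ Set.Icc (0 : ℝ) 1 :=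
    fun i => Filter.Eventually.of_forall fun ω => hf01 _
  have hYmemℒp : ∀ i, MemLp (Y i) 2 P := fun i =>
    memLp_of_bounded (hYbdd i) (hYmeas i).aestronglyMeasurable 2
  have hYintg : ∀ i, Integrable (Y i) P := fun i =>
    (hYmemℒp i).integrable (by norm_num)
  -- expectation of each Y i
  have hYexp : ∀ i : (Σ k : Fin (m + 1), Fin (n k)),
      ∫ ω, Y i ω ∂P = ∫ t, f t ∂(G i.1) := by
    intro i
    rw [← hXlaw i.1 i.2, integral_map (hXmeas i.1 i.2).aemeasurable
      hfmeas.aestronglyMeasurable]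
  -- withDensity: ∫ f dG k = ∫ e k * f dG 0
  have hwd : ∀ (g : ℝ → ℝ) k, ∫ t, g t ∂(G k) = ∫ t, e k t * g t ∂(G 0) := by
    intro g k
    have hmeasnn : Measurable fun t => (e k t).toNNReal := (hemeas k).real_toNNReal
    have hdens : (fun t => ENNReal.ofReal (Real.exp (∑ i, θ k i * q t i)))
        = fun t => ((fun t => (e k t).toNNReal) t : ℝ≥0∞) := rfl
    rw [hG k, hdens, integral_withDensity_eq_integral_smul hmeasnn]
    congr 1
    funext t
    simp [NNReal.smul_def, Real.coe_toNNReal _ (Real.exp_pos _).le]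
    exact Or.inl (Real.exp_pos _).le
  -- key identity
  have hind : ∫ t, (if t ≤ x then (1 : ℝ) else 0) ∂(G r) = (G r (Set.Iic x)).toReal := by
    have : (fun t => if t ≤ x then (1 : ℝ) else 0)
        = Set.indicator (Set.Iic x) (fun _ => (1 : ℝ)) := by
      funext t; simp [Set.indicator_apply, Set.mem_Iic]
    rw [this, integral_indicator_const (1 : ℝ) measurableSet_Iic, smul_eq_mul, mul_one]
    rfl
  have hintk : ∀ k, Integrable (fun t => e k t * f t) (G 0) := by
    intro k
    have hfint : Integrable f (G k) :=
      (memLp_of_bounded (Filter.Eventually.of_forall hf01)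
        hfmeas.aestronglyMeasurable 1).integrable le_rfl
    have hmeasnn : Measurable fun t => (e k t).toNNReal := (hemeas k).real_toNNReal
    have hfintw : Integrable f
        ((G 0).withDensity fun t => (((e k t).toNNReal : ℝ≥0) : ℝ≥0∞)) := by
      rw [hG k] at hfint; exact hfint
    have h2 := (integrable_withDensity_iff_integrable_smul hmeasnn).1 hfintw
    exact h2.congr (Filter.Eventually.of_forall fun t => by
      simp [NNReal.smul_def, Real.coe_toNNReal _ (Real.exp_pos _).le]
      exact Or.inl (Real.exp_pos _).le)
  have hkey : ∑ k, (n k : ℝ) * ∫ t, f t ∂(G k)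
      = (n r : ℝ) * (G r (Set.Iic x)).toReal := by
    have hpt : ∀ t, ∑ k, (n k : ℝ) * (e k t * f t)
        = (n r : ℝ) * (e r t * (if t ≤ x then (1 : ℝ) else 0)) := by
      intro t
      have hnk : ∀ k, (n k : ℝ) = ρ k * ∑ k', (n k' : ℝ) := by
        intro k; rw [hρ]; field_simp
      have hft : f t = ρ r * e r t / (∑ k', ρ k' * e k' t) * (if t ≤ x then 1 else 0) := by
        simp only [hf]; rw [hhfun]
      calc ∑ k, (n k : ℝ) * (e k t * f t)
          = (∑ k, ρ k * e k t) * (∑ k', (n k' : ℝ)) * f t := by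
            rw [Finset.sum_mul, Finset.sum_mul]
            refine Finset.sum_congr rfl fun k _ => ?_
            rw [hnk k]; ring
        _ = (n r : ℝ) * (e r t * (if t ≤ x then (1 : ℝ) else 0)) := by
            rw [hft, hnk r]
            field_simp [(hHpos t).ne']
    calc ∑ k, (n k : ℝ) * ∫ t, f t ∂(G k)
        = ∑ k, ∫ t, (n k : ℝ) * (e k t * f t) ∂(G 0) := by
          refine Finset.sum_congr rfl fun k _ => ?_
          rw [hwd f k, ← integral_const_mul]
      _ = ∫ t, ∑ k, (n k : ℝ) * (e k t * f t) ∂(G 0) :=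
          (integral_finset_sum _ fun k _ => (hintk k).const_mul _).symm
      _ = ∫ t, (n r : ℝ) * (e r t * (if t ≤ x then (1 : ℝ) else 0)) ∂(G 0) := by
          exact integral_congr_ae (Filter.Eventually.of_forall fun t => hpt t)
      _ = (n r : ℝ) * ∫ t, e r t * (if t ≤ x then (1 : ℝ) else 0) ∂(G 0) :=
          integral_const_mul _ _
      _ = (n r : ℝ) * (G r (Set.Iic x)).toReal := by
          rw [← hwd (fun t => if t ≤ x then (1 : ℝ) else 0) r, hind]
  -- the sum S and its expectation
  set S : Ω → ℝ := fun ω => ∑ i : (Σ k : Fin (m + 1), Fin (n k)), Y i ω with hS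
  have hsum_eq : ∀ ω, (∑ k, ∑ j, hfun r (X k j ω) * (if X k j ω ≤ x then (1 : ℝ) else 0))
      = S ω := by
    intro ω
    show _ = ∑ i : (Σ k : Fin (m + 1), Fin (n k)), Y i ω
    rw [← Finset.univ_sigma_univ, Finset.sum_sigma]
  have hSexp : ∫ ω, S ω ∂P = (n r : ℝ) * (G r (Set.Iic x)).toReal := by
    rw [hS]
    rw [integral_finset_sum _ fun i _ => hYintg i]
    rw [← Finset.univ_sigma_univ, Finset.sum_sigma]
    calc ∑ k, ∑ j : Fin (n k), ∫ ω, Y ⟨k, j⟩ ω ∂P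
        = ∑ k, ∑ _j : Fin (n k), ∫ t, f t ∂(G k) := by
          refine Finset.sum_congr rfl fun k _ => Finset.sum_congr rfl fun j _ => ?_
          exact hYexp ⟨k, j⟩
      _ = ∑ k, (n k : ℝ) * ∫ t, f t ∂(G k) := by
          refine Finset.sum_congr rfl fun k _ => ?_
          rw [Finset.sum_const, Finset.card_univ, Fintype.card_fin, nsmul_eq_mul]
      _ = (n r : ℝ) * (G r (Set.Iic x)).toReal := hkey
  have hSfun : S = ∑ i : (Σ k : Fin (m + 1), Fin (n k)), Y i := by
    funext ω; rw [hS]; simp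
  have hSmemℒp : MemLp S 2 P := by
    rw [hSfun]; exact memLp_finset_sum' _ fun i _ => hYmemℒp i
  -- T = n_r⁻¹ • S
  set T : Ω → ℝ := fun ω => ((n r : ℝ))⁻¹ * S ω with hT
  have hTsmul : T = ((n r : ℝ))⁻¹ • S := by funext ω; simp [hT]
  have hTmemℒp : MemLp T 2 P := by
    rw [hTsmul]; exact hSmemℒp.const_smul _
  have hTexp : ∫ ω, T ω ∂P = (G r (Set.Iic x)).toReal := by
    rw [hT]
    simp only []
    rw [integral_const_mul, hSexp, ← mul_assoc, inv_mul_cancel₀ hnr.ne', one_mul]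
  -- LHS equals variance of T
  have hLHS : ∫ ω, (((n r : ℝ))⁻¹ *
        (∑ k, ∑ j, hfun r (X k j ω) * (if X k j ω ≤ x then (1 : ℝ) else 0)) -
        (G r (Set.Iic x)).toReal) ^ 2 ∂P = variance T P := by
    rw [variance_eq_integral hTmemℒp.aestronglyMeasurable.aemeasurable]
    refine integral_congr_ae (Filter.Eventually.of_forall fun ω => ?_)
    simp only [Pi.pow_apply, Pi.sub_apply]
    rw [hsum_eq ω, hTexp]
  rw [hLHS]
  -- variance computation
  have hvarT : variance T P = ((n r : ℝ))⁻¹ ^ 2 * variance S P := by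
    rw [hTsmul, variance_smul]
  have hvarS : variance S P = ∑ i : (Σ k : Fin (m + 1), Fin (n k)), variance (Y i) P := by
    rw [hSfun]
    refine IndepFun.variance_sum (fun i _ => hYmemℒp i) ?_
    intro i _ j _ hij
    exact (hXindep.indepFun hij).comp hfmeas hfmeas
  have hvarY : ∀ i, variance (Y i) P ≤ 1 := by
    intro i
    calc variance (Y i) P ≤ ((1 - 0) / 2) ^ 2 :=
          variance_le_sq_of_bounded (hYbdd i) (hYmeas i).aemeasurable
      _ ≤ 1 := by norm_num
  have hcard : ∑ _i : (Σ k : Fin (m + 1), Fin (n k)), (1 : ℝ) = ∑ k', (n k' : ℝ) := by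
    rw [← Finset.univ_sigma_univ, Finset.sum_sigma]
    refine Finset.sum_congr rfl fun k _ => ?_
    rw [Finset.sum_const, Finset.card_univ, Fintype.card_fin, nsmul_eq_mul, mul_one]
  calc variance T P = ((n r : ℝ))⁻¹ ^ 2 * variance S P := hvarT
    _ ≤ ((n r : ℝ))⁻¹ ^ 2 * ∑ k', (n k' : ℝ) := by
        refine mul_le_mul_of_nonneg_left ?_ (by positivity)
        rw [hvarS, ← hcard]
        exact Finset.sum_le_sum fun i _ => hvarY i
    _ = (∑ k', (n k' : ℝ)) / (n r : ℝ) ^ 2 := by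
        rw [inv_pow]; ring
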